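/- If A is a square 0,±1 minimally non-totally unimodular matrix, then det(A) = ±2, the inverse A^{-1} has all entries equal to ±1/2, each row and each column of A has an even number of nonzero entries, and the sum of all entries of A is congruent to 2 modulo 4. -/

import Mathlib

/-- All the nonzero maximal (m×m) subdeterminants of `A` have the same absolute value. -/
def Equimodular {m n : ℕ} (A : Matrix (Fin m) (Fin n) ℚ) : Prop :=
  ∃ d : ℚ, ∀ g : Fin m ↪ Fin n,
    (A.submatrix id g).det ≠ 0 → |(A.submatrix id g).det| = d

/-- Every set of linearly independent rows of `A` forms an equimodular matrix. -/
def TotallyEquimodular {m n : ℕ} (A : Matrix (Fin m) (Fin n) ℚ) : Prop :=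
  ∀ (k : ℕ) (e : Fin k ↪ Fin m),
    LinearIndependent ℚ (fun i => A (e i)) → Equimodular (A.submatrix e id)

/-- All entries of `A` are `0`, `1` or `-1`. -/
def ZeroPmOne {m n : ℕ} (A : Matrix (Fin m) (Fin n) ℚ) : Prop :=
  ∀ i j, A i j = 0 ∨ A i j = 1 ∨ A i j = -1

/-- A linearly independent set of `0,±1` vectors whose matrix is totally equimodular. -/
def TeSet {m n : ℕ} (A : Matrix (Fin m) (Fin n) ℚ) : Prop :=
  ZeroPmOne A ∧ LinearIndependent ℚ (fun i => A i) ∧ TotallyEquimodular A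

/-- A linearly independent set of `0,±1` vectors whose matrix is totally unimodular. -/
def TuSet {m n : ℕ} (A : Matrix (Fin m) (Fin n) ℚ) : Prop :=
  ZeroPmOne A ∧ LinearIndependent ℚ (fun i => A i) ∧ A.IsTotallyUnimodular

/-- A te-set, not a tu-set, all of whose proper subsets of rows are tu-sets. -/
def TeLace {m n : ℕ} (A : Matrix (Fin m) (Fin n) ℚ) : Prop :=
  TeSet A ∧ ¬ TuSet A ∧
    ∀ (k : ℕ) (e : Fin k ↪ Fin m), k < m → TuSet (A.submatrix e id)

/-- `A` is not totally unimodular but every proper submatrix of `A` is. -/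
def MinNonTU {m n : ℕ} (A : Matrix (Fin m) (Fin n) ℚ) : Prop :=
  ¬ A.IsTotallyUnimodular ∧
    ∀ (k l : ℕ) (e : Fin k ↪ Fin m) (f : Fin l ↪ Fin n), k < m ∨ l < n →
      (A.submatrix e f).IsTotallyUnimodular

namespace CamionAux
open Matrix

variable {N n : ℕ} {A : Matrix (Fin n) (Fin n) ℚ}

def Hproper (A : Matrix (Fin n) (Fin n) ℚ) : Prop :=
  ∀ ⦃k : ℕ⦄, k < n → ∀ (f g : Fin k ↪ Fin n),
    (A.submatrix f g).det = 0 ∨ (A.submatrix f g).det = 1 ∨ (A.submatrix f g).det = -1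

lemma mem_sign_iff {x : ℚ} :
    x ∈ Set.range (SignType.cast : SignType → ℚ) ↔ (x = 0 ∨ x = 1 ∨ x = -1) := by
  constructor
  · rintro ⟨s, rfl⟩
    cases s with
    | zero => left; rfl
    | pos => right; left; rfl
    | neg => right; right; rfl
  · rintro (rfl | rfl | rfl)
    exacts [⟨0, rfl⟩, ⟨1, rfl⟩, ⟨-1, by simp⟩]

lemma properDet (hA : MinNonTU A) : Hproper A := by
  intro k hk f g
  have h := hA.2 k k f g (Or.inl hk)
  have := h k id id Function.injective_id Function.injective_id
  rw [Matrix.submatrix_id_id] at this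
  exact mem_sign_iff.mp this

lemma det_ne (h01 : ZeroPmOne A) (hA : MinNonTU A) :
    ¬ (A.det = 0 ∨ A.det = 1 ∨ A.det = -1) := by
  intro hd
  apply hA.1
  intro k f g hf hg
  rcases lt_or_ge k n with hk | hk
  · exact mem_sign_iff.mpr (properDet hA hk ⟨f, hf⟩ ⟨g, hg⟩)
  · have hkn : k = n := le_antisymm (by
      have := Fintype.card_le_of_injective f hf
      simpa using this) hk
    subst hkn
    have hfb : Function.Bijective f := (Finite.injective_iff_bijective).mp hf
    have hgb : Function.Bijective g := (Finite.injective_iff_bijective).mp hg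
    set σ : Equiv.Perm (Fin k) := Equiv.ofBijective f hfb
    set τ : Equiv.Perm (Fin k) := Equiv.ofBijective g hgb
    have hsub : A.submatrix f g = (A.submatrix id g).submatrix σ id := by
      ext i j; rfl
    rw [mem_sign_iff]
    have h1 : (A.submatrix id g).det = (Equiv.Perm.sign τ : ℚ) * A.det := by
      have h : A.submatrix id g = A.submatrix id ⇑τ := rfl
      rw [h, Matrix.det_permute']
    have h2 : (A.submatrix f g).det = (Equiv.Perm.sign σ : ℚ) * (A.submatrix id g).det := by
      rw [hsub, Matrix.det_permute]
    rw [h2, h1]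
    rcases Int.units_eq_one_or (Equiv.Perm.sign σ) with hs | hs <;>
      rcases Int.units_eq_one_or (Equiv.Perm.sign τ) with ht | ht <;>
      rw [hs, ht] <;>
      rcases hd with h | h | h <;> rw [h] <;> norm_num

lemma two_le (h01 : ZeroPmOne A) (hA : MinNonTU A) : 2 ≤ n := by
  by_contra hlt
  push_neg at hlt
  apply det_ne h01 hA
  interval_cases n
  · right; left; exact Matrix.det_isEmpty
  · rw [Matrix.det_fin_one]
    exact h01 0 0

lemma fin_sum_restrict {n s : ℕ} (g : Fin s ↪ Fin n) (F : Fin n → ℚ)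
    (hF : ∀ k, k ∉ Set.range g → F k = 0) :
    ∑ k, F k = ∑ r, F (g r) := by
  rw [← Finset.sum_map Finset.univ g F]
  symm
  apply Finset.sum_subset (Finset.subset_univ _)
  intro k _ hk
  apply hF
  intro ⟨r, hr⟩
  exact hk (Finset.mem_map.mpr ⟨r, Finset.mem_univ r, hr⟩)

lemma exists_invertible_rows {n s : ℕ} (B : Matrix (Fin n) (Fin s) ℚ)
    (h : Function.Injective B.mulVec) :
    ∃ e : Fin s ↪ Fin n, IsUnit (B.submatrix e id) := by
  classical
  have hrank : B.rank = s := by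
    have : Function.Injective B.mulVecLin := h
    rw [Matrix.rank, LinearMap.finrank_range_of_inj this]
    simp [Module.finrank_fintype_fun_eq_card]
  have hspan : Submodule.span ℚ (Set.range fun i => B i) = ⊤ := by
    have h1 : Bᵀ.rank = s := by rw [Matrix.rank_transpose, hrank]
    have h2 : Bᵀ.rank = Module.finrank ℚ (Submodule.span ℚ (Set.range fun i => B i)) := by
      rw [Matrix.rank_eq_finrank_span_cols, Matrix.col, Matrix.transpose_transpose]
    apply Submodule.eq_top_of_finrank_eq
    rw [← h2, h1, Module.finrank_fintype_fun_eq_card, Fintype.card_fin]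
  obtain ⟨b, hbsub, hbspan, hbli⟩ := exists_linearIndependent ℚ (Set.range fun i => B i)
  rw [hspan] at hbspan
  have hbfin : b.Finite := (Set.finite_range fun i => B i).subset hbsub
  haveI : Fintype b := hbfin.fintype
  have hbasis : Nonempty (Module.Basis b ℚ (Fin s → ℚ)) :=
    ⟨Module.Basis.mk hbli (by rw [Subtype.range_coe, hbspan])⟩
  obtain ⟨v⟩ := hbasis
  have hcard : Fintype.card b = s := by
    rw [← Module.finrank_eq_card_basis v]
    simp [Module.finrank_fintype_fun_eq_card]
  obtain ⟨eqv⟩ : Nonempty (Fin s ≃ b) := by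
    rw [← Fintype.card_eq, hcard, Fintype.card_fin]
  have hchoice : ∀ x : b, ∃ i : Fin n, B i = (x : Fin s → ℚ) := fun x => hbsub x.2
  choose idx hidx using hchoice
  have hinj : Function.Injective (fun i => idx (eqv i)) := by
    intro i i' hii
    have hB : B (idx (eqv i)) = B (idx (eqv i')) := congrArg B hii
    rw [hidx (eqv i), hidx (eqv i')] at hB
    exact eqv.injective (Subtype.ext hB)
  have hli2 : LinearIndependent ℚ (fun i => B (idx (eqv i))) := by
    have key := hbli.comp eqv eqv.injective
    have hfun : (fun i => B (idx (eqv i))) = (Subtype.val ∘ eqv) := by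
      funext i; exact hidx (eqv i)
    rw [hfun]; exact key
  refine ⟨⟨fun i => idx (eqv i), hinj⟩, ?_⟩
  rw [← Matrix.linearIndependent_rows_iff_isUnit]
  exact hli2

lemma engine (hproper : Hproper A)
    (hdet : A.det ≠ 0) (w : Fin n → ℚ) (k₀ : Fin n) (hk₀ : w k₀ = 0) (hw0 : w ≠ 0) :
    ∃ (s : ℕ) (T g : Fin s ↪ Fin n) (_ : s < n) (_ : 0 < s),
      ((A.submatrix T g).det = 1 ∨ (A.submatrix T g).det = -1) ∧
      (∀ i', w (g i') ≠ 0) ∧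
      ∀ i', (A.submatrix T g).det * w (g i') =
        ((A.submatrix T g).updateCol i' (fun t => A.mulVec w (T t))).det := by
  classical
  have hAunit : IsUnit A := by
    rw [Matrix.isUnit_iff_isUnit_det, isUnit_iff_ne_zero]; exact hdet
  set S : Finset (Fin n) := Finset.univ.filter (fun k => w k ≠ 0) with hS
  set s : ℕ := S.card with hs
  have hmemS : ∀ k, k ∈ S ↔ w k ≠ 0 := by
    intro k; simp [hS]
  have hsn : s < n := by
    have : S ⊆ Finset.univ.erase k₀ := by
      intro k hk
      rw [Finset.mem_erase]
      refine ⟨?_, Finset.mem_univ k⟩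
      rintro rfl
      exact ((hmemS k).mp hk) hk₀
    calc s ≤ (Finset.univ.erase k₀).card := Finset.card_le_card this
    _ < Finset.univ.card := Finset.card_erase_lt_of_mem (Finset.mem_univ k₀)
    _ = n := Finset.card_fin n
  have hs0 : 0 < s := by
    rw [hs, Finset.card_pos]
    obtain ⟨k, hk⟩ := Function.ne_iff.mp hw0
    exact ⟨k, (hmemS k).mpr hk⟩
  set g0 : Fin s ↪o Fin n := S.orderEmbOfFin rfl with hg0
  set g : Fin s ↪ Fin n := g0.toEmbedding with hgdef
  have hgS : ∀ i, g i ∈ S := fun i => S.orderEmbOfFin_mem rfl i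
  have hrange : ∀ k, k ∉ Set.range g → w k = 0 := by
    intro k hk
    by_contra hwk
    have hkS : k ∈ S := (hmemS k).mpr hwk
    apply hk
    rw [show Set.range ⇑g = ↑S from Finset.range_orderEmbOfFin S rfl]
    exact Finset.mem_coe.mpr hkS
  set B : Matrix (Fin n) (Fin s) ℚ := A.submatrix id g with hB
  have hBinj : Function.Injective B.mulVec := by
    have hker : ∀ x, B.mulVec x = 0 → x = 0 := by
      intro x hx
      set y : Fin n → ℚ := fun k => if h : ∃ r, g r = k then x h.choose else 0 with hy
      have hyg : ∀ r, y (g r) = x r := by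
        intro r
        have hex : ∃ r', g r' = g r := ⟨r, rfl⟩
        have : hex.choose = r := g.injective hex.choose_spec
        simp only [hy, dif_pos hex, this]
      have hAy : A.mulVec y = B.mulVec x := by
        funext i
        rw [Matrix.mulVec, dotProduct]
        rw [fin_sum_restrict g (fun k => A i k * y k) ?_]
        · simp only [Matrix.mulVec, dotProduct, hB, Matrix.submatrix_apply, id_eq]
          exact Finset.sum_congr rfl fun r _ => by rw [hyg r]
        · intro k hk
          have hyk : y k = 0 := by
            simp only [hy, dif_neg (fun h : ∃ r, g r = k => hk ⟨h.choose, h.choose_spec⟩)]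
          show A i k * y k = 0
          rw [hyk, mul_zero]
      have hy0 : y = 0 := by
        apply Matrix.mulVec_injective_iff_isUnit.mpr hAunit
        rw [hAy, hx, Matrix.mulVec_zero]
      funext r
      rw [← hyg r, hy0]
      rfl
    intro x x' hxx
    have : B.mulVec (x - x') = 0 := by
      rw [Matrix.mulVec_sub, hxx, sub_self]
    have := hker _ this
    exact sub_eq_zero.mp this
  obtain ⟨T, hT⟩ := exists_invertible_rows B hBinj
  have hMeq : B.submatrix T id = A.submatrix T g := by
    ext i j
    simp [hB]
  rw [hMeq] at hT
  have hMdet : (A.submatrix T g).det = 1 ∨ (A.submatrix T g).det = -1 := by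
    have hne : (A.submatrix T g).det ≠ 0 := by
      rw [← isUnit_iff_ne_zero, ← Matrix.isUnit_iff_isUnit_det]
      exact hT
    rcases hproper hsn T g with h | h | h
    · exact absurd h hne
    · exact Or.inl h
    · exact Or.inr h
  have hkey : (A.submatrix T g).mulVec (fun r => w (g r)) = fun i => A.mulVec w (T i) := by
    funext i
    have hres := fin_sum_restrict g (fun k => A (T i) k * w k)
      (fun k hk => by show A (T i) k * w k = 0; rw [hrange k hk, mul_zero])
    simp only [Matrix.mulVec, dotProduct] at hres ⊢
    rw [hres]
    rfl
  have hcramer : Matrix.cramer (A.submatrix T g) (fun i => A.mulVec w (T i)) =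
      (A.submatrix T g).det • (fun r => w (g r)) := by
    apply Matrix.mulVec_injective_iff_isUnit.mpr hT
    rw [Matrix.mulVec_cramer, ← hkey, Matrix.mulVec_smul]
  refine ⟨s, T, g, hsn, hs0, hMdet, fun i' => (hmemS _).mp (hgS i'), fun i' => ?_⟩
  have hcf := congrFun hcramer i'
  rw [Matrix.cramer_apply] at hcf
  rw [hcf]
  simp

lemma det_updateCol_single {m : ℕ} (M : Matrix (Fin (m+1)) (Fin (m+1)) ℚ) (i t : Fin (m+1)) :
    ∃ ε : ℚ, (ε = 1 ∨ ε = -1) ∧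
      (M.updateCol i (Pi.single t 1)).det =
        ε * (M.submatrix t.succAbove i.succAbove).det := by
  refine ⟨(-1) ^ (t + i : ℕ), by rcases Nat.even_or_odd (t + i : ℕ) with h | h <;>
    simp [h.neg_one_pow, Odd.neg_one_pow], ?_⟩
  rw [Matrix.det_succ_column _ i]
  rw [Fintype.sum_eq_single t ?_]
  · rw [Matrix.updateCol_self, Pi.single_eq_same, mul_one,
      Matrix.submatrix_updateCol_succAbove]
  · intro r hr
    rw [Matrix.updateCol_self, Pi.single_eq_of_ne hr, mul_zero, zero_mul]

lemma updateCol_indicator (hproper : Hproper A) {s : ℕ} (hs : s < n) (hs0 : 0 < s)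
    (T g : Fin s ↪ Fin n) (i : Fin s) (j : Fin n) :
    ((A.submatrix T g).updateCol i (fun t => if T t = j then (1:ℚ) else 0)).det = 0 ∨
    ((A.submatrix T g).updateCol i (fun t => if T t = j then (1:ℚ) else 0)).det = 1 ∨
    ((A.submatrix T g).updateCol i (fun t => if T t = j then (1:ℚ) else 0)).det = -1 := by
  obtain ⟨m, rfl⟩ : ∃ m, s = m + 1 := ⟨s - 1, by omega⟩
  by_cases hj : ∃ t₀, T t₀ = j
  · obtain ⟨t₀, rfl⟩ := hj
    have hcol : (fun t => if T t = T t₀ then (1:ℚ) else 0) = Pi.single t₀ 1 := by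
      funext t
      by_cases ht : t = t₀
      · subst ht; simp
      · rw [if_neg (fun h => ht (T.injective h)), Pi.single_eq_of_ne ht]
    rw [hcol]
    obtain ⟨ε, hε, hdet⟩ := det_updateCol_single (A.submatrix T g) i t₀
    rw [hdet]
    have hsub : (A.submatrix T g).submatrix t₀.succAbove i.succAbove =
        A.submatrix ((t₀.succAboveEmb).trans T) ((i.succAboveEmb).trans g) := by
      ext a b; simp [Matrix.submatrix_apply]
    rw [hsub]
    have hm : m < n := by omega
    rcases hproper hm ((t₀.succAboveEmb).trans T) ((i.succAboveEmb).trans g) with h | h | h <;>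
      rcases hε with rfl | rfl <;> rw [h] <;> norm_num
  · left
    apply Matrix.det_eq_zero_of_column_eq_zero i
    intro r
    rw [Matrix.updateCol_self]
    exact if_neg (fun h => hj ⟨r, h⟩)

lemma adj_sign (hproper : Hproper A) (hn : 2 ≤ n) (i j : Fin n) :
    adjugate A i j = 0 ∨ adjugate A i j = 1 ∨ adjugate A i j = -1 := by
  obtain ⟨m, rfl⟩ : ∃ m, n = m + 1 := ⟨n - 1, by omega⟩
  rw [Matrix.adjugate_fin_succ_eq_det_submatrix]
  have hm : m < m + 1 := by omega
  have hsub : A.submatrix j.succAbove i.succAbove =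
      A.submatrix (j.succAboveEmb) (i.succAboveEmb) := rfl
  rw [hsub]
  rcases hproper hm (j.succAboveEmb) (i.succAboveEmb) with h | h | h <;>
    rcases Nat.even_or_odd (j + i : ℕ) with hp | hp <;>
    rw [h] <;> simp [hp.neg_one_pow, Odd.neg_one_pow]

lemma mulVec_adj_col (A : Matrix (Fin n) (Fin n) ℚ) (j : Fin n) :
    A.mulVec (fun i => adjugate A i j) = fun i => A.det * (if i = j then 1 else 0) := by
  funext i
  have : A.mulVec (fun k => adjugate A k j) i = (A * adjugate A) i j := by
    simp [Matrix.mulVec, Matrix.mul_apply, dotProduct]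
  rw [this, Matrix.mul_adjugate]
  simp [Matrix.one_apply]

lemma vecMul_adj_row (A : Matrix (Fin n) (Fin n) ℚ) (t j : Fin n) :
    (∑ k, adjugate A t k * A k j) = A.det * (if t = j then 1 else 0) := by
  have : (∑ k, adjugate A t k * A k j) = (adjugate A * A) t j := by
    simp [Matrix.mul_apply]
  rw [this, Matrix.adjugate_mul]
  simp [Matrix.one_apply]

lemma adj_pm (hproper : Hproper A) (hn : 2 ≤ n)
    (hd0 : A.det ≠ 0) (hd1 : A.det ≠ 1) (hdm1 : A.det ≠ -1) (i₀ j : Fin n) :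
    adjugate A i₀ j = 1 ∨ adjugate A i₀ j = -1 := by
  rcases adj_sign hproper hn i₀ j with hz | h | h
  · exfalso
    set w : Fin n → ℚ := fun i => adjugate A i j with hw
    have hw0 : w ≠ 0 := by
      intro h0
      have hc := congrFun (mulVec_adj_col A j) j
      rw [show (fun i => adjugate A i j) = w from rfl, h0, Matrix.mulVec_zero] at hc
      simp at hc
      exact hd0 (by linarith)
    obtain ⟨s, T, g, hsn, hs0, hMdet, hwg, heqs⟩ := engine hproper hd0 w i₀ hz hw0
    set i' : Fin s := ⟨0, hs0⟩
    have heq := heqs i'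
    have hcoleq : (fun t => A.mulVec w (T t)) =
        A.det • (fun t => if T t = j then (1:ℚ) else 0) := by
      funext t
      rw [mulVec_adj_col A j]
      simp [smul_eq_mul]
    rw [hcoleq, Matrix.det_updateCol_smul] at heq
    have hδ := updateCol_indicator hproper hsn hs0 T g i' j
    have hwpm : w (g i') = 1 ∨ w (g i') = -1 := by
      rcases adj_sign hproper hn (g i') j with h | h | h
      · exact absurd h (hwg i')
      · exact Or.inl h
      · exact Or.inr h
    rcases hMdet with h1 | h1 <;> rcases hwpm with h2 | h2 <;> rcases hδ with h3 | h3 | h3 <;>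
      rw [h1, h2, h3] at heq <;> ring_nf at heq <;>
      first
        | exact hd1 (by linarith)
        | exact hdm1 (by linarith)
        | linarith
  · exact Or.inl h
  · exact Or.inr h

set_option maxHeartbeats 2000000 in
lemma det_pm_two (hproper : Hproper A) (hn : 2 ≤ n)
    (hd0 : A.det ≠ 0) (hd1 : A.det ≠ 1) (hdm1 : A.det ≠ -1) :
    A.det = 2 ∨ A.det = -2 := by
  set j₀ : Fin n := ⟨0, by omega⟩ with hj₀
  set j₁ : Fin n := ⟨1, by omega⟩ with hj₁
  have hjne : j₀ ≠ j₁ := by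
    simp [hj₀, hj₁, Fin.ext_iff]
  set c : Fin n → ℚ := fun k => adjugate A k j₀ with hcdef
  set c' : Fin n → ℚ := fun k => adjugate A k j₁ with hc'def
  have hc : ∀ k, c k = 1 ∨ c k = -1 := fun k => adj_pm hproper hn hd0 hd1 hdm1 k j₀
  have hc' : ∀ k, c' k = 1 ∨ c' k = -1 := fun k => adj_pm hproper hn hd0 hd1 hdm1 k j₁
  set v : Fin n → ℚ := fun k => (c k - c' k)/2 with hvdef
  have hAv : A.mulVec v = fun i =>
      (A.det/2) * ((if i = j₀ then 1 else 0) - (if i = j₁ then 1 else 0)) := by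
    have hveq : v = (1/2 : ℚ) • (c - c') := by
      funext k; simp [hvdef]; ring
    rw [hveq, Matrix.mulVec_smul, Matrix.mulVec_sub, mulVec_adj_col A j₀, mulVec_adj_col A j₁]
    funext i
    simp only [Pi.smul_apply, Pi.sub_apply, smul_eq_mul]
    split_ifs <;> ring
  have hv0 : v ≠ 0 := by
    intro h0
    have hq := congrFun hAv j₀
    rw [h0, Matrix.mulVec_zero] at hq
    rw [if_pos rfl, if_neg hjne] at hq
    have hq2 : (0:ℚ) = A.det / 2 * (1 - 0) := hq
    exact hd0 (by linarith)
  have hex : ∃ k, v k = 0 := by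
    by_contra hno
    push_neg at hno
    have hc'neg : c' = -c := by
      funext k
      have hvk := hno k
      have hvk2 : (c k - c' k)/2 ≠ 0 := hvk
      show c' k = -(c k)
      rcases hc k with h1 | h1 <;> rcases hc' k with h2 | h2 <;>
        rw [h1, h2] at hvk2 ⊢ <;> norm_num at hvk2 <;> norm_num
    have hmv : A.mulVec c' = -(A.mulVec c) := by
      rw [hc'neg, Matrix.mulVec_neg]
    have e1 := congrFun hmv j₀
    rw [mulVec_adj_col A j₀, mulVec_adj_col A j₁] at e1
    have e2 : A.det * (if j₀ = j₁ then (1:ℚ) else 0) =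
        -(A.det * (if j₀ = j₀ then (1:ℚ) else 0)) := e1
    rw [if_pos rfl, if_neg hjne] at e2
    simp at e2
    exact hd0 (by linarith)
  obtain ⟨k, hk⟩ := hex
  obtain ⟨s, T, g, hsn, hs0, hMdet, hwg, heqs⟩ := engine hproper hd0 v k hk hv0
  set i' : Fin s := ⟨0, hs0⟩ with hi'
  have heq := heqs i'
  have hcoleq : (fun t => A.mulVec v (T t)) =
      (A.det/2) • ((fun t => if T t = j₀ then (1:ℚ) else 0) +
        (-1 : ℚ) • (fun t => if T t = j₁ then (1:ℚ) else 0)) := by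
    funext t
    rw [hAv]
    simp only [Pi.smul_apply, Pi.add_apply, smul_eq_mul]
    ring
  rw [hcoleq, Matrix.det_updateCol_smul, Matrix.det_updateCol_add,
    Matrix.det_updateCol_smul] at heq
  have hδ₀ := updateCol_indicator hproper hsn hs0 T g i' j₀
  have hδ₁ := updateCol_indicator hproper hsn hs0 T g i' j₁
  have hvpm : v (g i') = 1 ∨ v (g i') = -1 := by
    have hne := hwg i'
    have hvg : v (g i') = (c (g i') - c' (g i'))/2 := rfl
    rcases hc (g i') with h1 | h1 <;> rcases hc' (g i') with h2 | h2 <;>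
      rw [hvg, h1, h2] at hne ⊢ <;> norm_num at hne <;> norm_num
  rcases hMdet with h1 | h1 <;> rcases hvpm with h2 | h2 <;> rcases hδ₀ with h3 | h3 | h3 <;>
    rcases hδ₁ with h4 | h4 | h4 <;> rw [h1, h2, h3, h4] at heq <;> ring_nf at heq <;>
    first
      | (left; linarith)
      | (right; linarith)
      | (exfalso; exact hd1 (by linarith))
      | (exfalso; exact hdm1 (by linarith))
      | (exfalso; linarith)

lemma sum_eq_cards (f : Fin N → ℚ) (hf : ∀ k, f k = 0 ∨ f k = 1 ∨ f k = -1) :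
    ∑ k, f k = ((Finset.univ.filter fun k => f k = 1).card : ℚ)
      - ((Finset.univ.filter fun k => f k = -1).card : ℚ) := by
  classical
  rw [← Finset.sum_filter_add_sum_filter_not Finset.univ (fun k => f k = 1)]
  have e1 : ∑ k ∈ Finset.univ.filter (fun k => f k = 1), f k
      = ((Finset.univ.filter fun k => f k = 1).card : ℚ) := by
    rw [Finset.sum_congr rfl (fun k hk => (Finset.mem_filter.mp hk).2)]
    simp
  have e2 : ∑ k ∈ Finset.univ.filter (fun k => f k = -1), f k
      = ∑ k ∈ Finset.univ.filter (fun k => ¬ f k = 1), f k := by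
    apply Finset.sum_subset
    · intro k hk
      simp only [Finset.mem_filter, Finset.mem_univ, true_and] at hk ⊢
      rw [hk]; norm_num
    · intro k hk hk2
      simp only [Finset.mem_filter, Finset.mem_univ, true_and] at hk hk2
      rcases hf k with h | h | h
      · exact h
      · exact absurd h hk
      · exact absurd h hk2
  have e3 : ∑ k ∈ Finset.univ.filter (fun k => f k = -1), f k
      = -((Finset.univ.filter fun k => f k = -1).card : ℚ) := by
    rw [Finset.sum_congr rfl (fun k hk => (Finset.mem_filter.mp hk).2)]
    simp
  rw [e1, ← e2, e3]
  ring

lemma card_eq_cards (f : Fin N → ℚ) (hf : ∀ k, f k = 0 ∨ f k = 1 ∨ f k = -1) :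
    (Finset.univ.filter fun k => f k ≠ 0).card =
      (Finset.univ.filter fun k => f k = 1).card +
      (Finset.univ.filter fun k => f k = -1).card := by
  classical
  have hU : (Finset.univ.filter fun k => f k ≠ 0) =
      (Finset.univ.filter fun k => f k = 1) ∪ (Finset.univ.filter fun k => f k = -1) := by
    ext k
    simp only [Finset.mem_filter, Finset.mem_union, Finset.mem_univ, true_and]
    rcases hf k with h | h | h <;> rw [h] <;> norm_num
  rw [hU, Finset.card_union_of_disjoint]
  rw [Finset.disjoint_left]
  intro k h1 h2
  simp only [Finset.mem_filter] at h1 h2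
  rw [h1.2] at h2
  norm_num at h2

lemma even_card_of_sum_zero (f : Fin N → ℚ) (hf : ∀ k, f k = 0 ∨ f k = 1 ∨ f k = -1)
    (hsum : ∑ k, f k = 0) :
    Even (Finset.univ.filter fun k => f k ≠ 0).card := by
  have h1 := sum_eq_cards f hf
  have h2 := card_eq_cards f hf
  rw [hsum] at h1
  have h3 : ((Finset.univ.filter fun k => f k = 1).card : ℚ)
      = ((Finset.univ.filter fun k => f k = -1).card : ℚ) := by linarith
  have h4 : (Finset.univ.filter fun k => f k = 1).card
      = (Finset.univ.filter fun k => f k = -1).card := by exact_mod_cast h3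
  rw [h2, h4]
  exact ⟨_, rfl⟩

lemma even_colsum (f : Fin N → ℚ) (hf : ∀ k, f k = 0 ∨ f k = 1 ∨ f k = -1)
    (heven : Even (Finset.univ.filter fun k => f k ≠ 0).card) :
    ∃ μ : ℤ, ∑ k, f k = 2 * μ := by
  obtain ⟨t, ht⟩ := heven
  have h1 := sum_eq_cards f hf
  have h2 := card_eq_cards f hf
  refine ⟨(t : ℤ) - ((Finset.univ.filter fun k => f k = -1).card : ℤ), ?_⟩
  have h3 : (Finset.univ.filter fun k => f k = 1).card +
      (Finset.univ.filter fun k => f k = -1).card = t + t := by rw [← h2, ht]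
  have h4 : ((Finset.univ.filter fun k => f k = 1).card : ℚ) +
      ((Finset.univ.filter fun k => f k = -1).card : ℚ) = (t : ℚ) + (t : ℚ) := by
    exact_mod_cast h3
  rw [h1]
  push_cast
  linarith

lemma row_even (h01 : ZeroPmOne A) (hproper : Hproper A) (hn : 2 ≤ n)
    (hd0 : A.det ≠ 0) (hd1 : A.det ≠ 1) (hdm1 : A.det ≠ -1) (i : Fin n) :
    Even (Finset.univ.filter fun j => A i j ≠ 0).card := by
  obtain ⟨j, hji⟩ : ∃ j : Fin n, j ≠ i := by
    refine ⟨if h : i = ⟨0, by omega⟩ then ⟨1, by omega⟩ else ⟨0, by omega⟩, ?_⟩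
    split_ifs with h
    · rw [h]; simp [Fin.ext_iff]
    · intro hc; exact h hc.symm
  set c : Fin n → ℚ := fun k => adjugate A k j with hcdef
  have hcpm : ∀ k, c k = 1 ∨ c k = -1 := fun k => adj_pm hproper hn hd0 hd1 hdm1 k j
  have hsum : ∑ k, A i k * c k = 0 := by
    have hmv := congrFun (mulVec_adj_col A j) i
    have h0 : (∑ k, A i k * c k) = A.mulVec c i := rfl
    rw [h0, hmv, if_neg (fun h : i = j => hji h.symm), mul_zero]
  have hfpm : ∀ k, A i k * c k = 0 ∨ A i k * c k = 1 ∨ A i k * c k = -1 := by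
    intro k
    rcases h01 i k with h | h | h <;> rcases hcpm k with h2 | h2 <;> rw [h, h2] <;> norm_num
  have hres := even_card_of_sum_zero (fun k => A i k * c k) hfpm hsum
  have hfe : (Finset.univ.filter fun k => A i k ≠ 0) =
      (Finset.univ.filter fun k => A i k * c k ≠ 0) := by
    ext k
    simp only [Finset.mem_filter, Finset.mem_univ, true_and]
    have hck : c k ≠ 0 := by rcases hcpm k with h | h <;> rw [h] <;> norm_num
    constructor
    · exact fun h => mul_ne_zero h hck
    · intro h hA0
      exact h (by rw [hA0, zero_mul])
  rw [hfe]
  exact hres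

lemma col_even (h01 : ZeroPmOne A) (hproper : Hproper A) (hn : 2 ≤ n)
    (hd0 : A.det ≠ 0) (hd1 : A.det ≠ 1) (hdm1 : A.det ≠ -1) (j : Fin n) :
    Even (Finset.univ.filter fun i => A i j ≠ 0).card := by
  obtain ⟨t, htj⟩ : ∃ t : Fin n, t ≠ j := by
    refine ⟨if h : j = ⟨0, by omega⟩ then ⟨1, by omega⟩ else ⟨0, by omega⟩, ?_⟩
    split_ifs with h
    · rw [h]; simp [Fin.ext_iff]
    · intro hc; exact h hc.symm
  set r : Fin n → ℚ := fun k => adjugate A t k with hrdef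
  have hrpm : ∀ k, r k = 1 ∨ r k = -1 := fun k => adj_pm hproper hn hd0 hd1 hdm1 t k
  have hsum : ∑ k, r k * A k j = 0 := by
    have hmv := vecMul_adj_row A t j
    rw [show (∑ k, adjugate A t k * A k j) = ∑ k, r k * A k j from rfl] at hmv
    rw [hmv, if_neg htj, mul_zero]
  have hfpm : ∀ k, r k * A k j = 0 ∨ r k * A k j = 1 ∨ r k * A k j = -1 := by
    intro k
    rcases h01 k j with h | h | h <;> rcases hrpm k with h2 | h2 <;> rw [h, h2] <;> norm_num
  have hres := even_card_of_sum_zero (fun k => r k * A k j) hfpm hsum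
  have hfe : (Finset.univ.filter fun i => A i j ≠ 0) =
      (Finset.univ.filter fun k => r k * A k j ≠ 0) := by
    ext k
    simp only [Finset.mem_filter, Finset.mem_univ, true_and]
    have hrk : r k ≠ 0 := by rcases hrpm k with h | h <;> rw [h] <;> norm_num
    constructor
    · exact fun h => mul_ne_zero hrk h
    · intro h hA0
      exact h (by rw [hA0, mul_zero])
  rw [hfe]
  exact hres

lemma total_sum (h01 : ZeroPmOne A) (hproper : Hproper A) (hn : 2 ≤ n)
    (hd0 : A.det ≠ 0) (hd1 : A.det ≠ 1) (hdm1 : A.det ≠ -1)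
    (hdet2 : A.det = 2 ∨ A.det = -2)
    (hcols : ∀ j : Fin n, Even (Finset.univ.filter fun i => A i j ≠ 0).card) :
    ∃ z : ℤ, (∑ i, ∑ j, A i j) = 4 * z + 2 := by
  classical
  set j₀ : Fin n := ⟨0, by omega⟩ with hj₀
  set c : Fin n → ℚ := fun k => adjugate A k j₀ with hcdef
  have hcpm : ∀ k, c k = 1 ∨ c k = -1 := fun k => adj_pm hproper hn hd0 hd1 hdm1 k j₀
  have hmv : ∑ i, A.mulVec c i = A.det := by
    rw [Finset.sum_congr rfl (fun i _ => congrFun (mulVec_adj_col A j₀) i)]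
    simp
  have h2 : ∑ k, (∑ i, A i k) * c k = A.det := by
    rw [← hmv]
    calc ∑ k, (∑ i, A i k) * c k = ∑ k, ∑ i, A i k * c k := by
          exact Finset.sum_congr rfl fun k _ => Finset.sum_mul ..
      _ = ∑ i, ∑ k, A i k * c k := Finset.sum_comm
      _ = ∑ i, A.mulVec c i := rfl
  have hμex : ∀ k : Fin n, ∃ μ : ℤ, ∑ i, A i k = 2 * μ := fun k =>
    even_colsum (fun i => A i k) (fun i => h01 i k) (hcols k)
  choose μ hμ using hμex
  set ζ : Fin n → ℤ := fun k => if c k = 1 then 0 else 1 with hζ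
  have hck : ∀ k, (1:ℚ) - c k = 2 * (ζ k : ℚ) := by
    intro k
    by_cases h : c k = 1
    · simp [hζ, h]
    · have hm : c k = -1 := (hcpm k).resolve_left h
      rw [hm]
      simp [hζ, h]
      norm_num
  have key : (∑ i, ∑ k, A i k) = A.det + ∑ k, (4:ℚ) * ((μ k * ζ k : ℤ) : ℚ) := by
    rw [show (∑ i, ∑ k, A i k) = ∑ k, ∑ i, A i k from Finset.sum_comm]
    calc ∑ k, ∑ i, A i k
        = ∑ k, ((∑ i, A i k) * c k + (∑ i, A i k) * (1 - c k)) := by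
          exact Finset.sum_congr rfl fun k _ => by ring
      _ = (∑ k, (∑ i, A i k) * c k) + ∑ k, (∑ i, A i k) * (1 - c k) :=
          Finset.sum_add_distrib
      _ = A.det + ∑ k, (4:ℚ) * ((μ k * ζ k : ℤ) : ℚ) := by
          rw [h2]
          congr 1
          refine Finset.sum_congr rfl fun k _ => ?_
          rw [hμ k, hck k]
          push_cast
          ring
  have h4 : ∑ x : Fin n, (4:ℚ) * ((μ x : ℚ) * (ζ x : ℚ)) =
      4 * ∑ x : Fin n, ((μ x : ℚ) * (ζ x : ℚ)) := (Finset.mul_sum _ _ _).symm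
  rcases hdet2 with hd | hd
  · refine ⟨∑ k, μ k * ζ k, ?_⟩
    rw [key, hd]
    push_cast
    rw [h4]
    ring
  · refine ⟨(∑ k, μ k * ζ k) - 1, ?_⟩
    rw [key, hd]
    push_cast
    rw [h4]
    ring

end CamionAux

theorem stmt7 {n : ℕ} (A : Matrix (Fin n) (Fin n) ℚ)
    (h01 : ZeroPmOne A) (hA : MinNonTU A) :
    (A.det = 2 ∨ A.det = -2) ∧
    (∀ i j, A⁻¹ i j = 1 / 2 ∨ A⁻¹ i j = -(1 / 2)) ∧
    (∀ i : Fin n, Even (Finset.univ.filter fun j => A i j ≠ 0).card) ∧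
    (∀ j : Fin n, Even (Finset.univ.filter fun i => A i j ≠ 0).card) ∧
    (∃ z : ℤ, (∑ i, ∑ j, A i j) = 4 * z + 2) := by
  classical
  have hproper : CamionAux.Hproper A := CamionAux.properDet hA
  have hdn := CamionAux.det_ne h01 hA
  rw [not_or, not_or] at hdn
  obtain ⟨hd0, hd1, hdm1⟩ := hdn
  have hn : 2 ≤ n := CamionAux.two_le h01 hA
  have hdet2 := CamionAux.det_pm_two hproper hn hd0 hd1 hdm1
  refine ⟨hdet2, ?_, ?_, ?_, ?_⟩
  · intro i j
    have hadj := CamionAux.adj_pm hproper hn hd0 hd1 hdm1 i j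
    have hinv : A⁻¹ i j = (A.det)⁻¹ * Matrix.adjugate A i j := by
      rw [Matrix.inv_def, Ring.inverse_eq_inv]
      rfl
    rw [hinv]
    rcases hdet2 with hd | hd <;> rcases hadj with ha | ha <;> rw [hd, ha] <;> norm_num
  · exact fun i => CamionAux.row_even h01 hproper hn hd0 hd1 hdm1 i
  · exact fun j => CamionAux.col_even h01 hproper hn hd0 hd1 hdm1 j
  · exact CamionAux.total_sum h01 hproper hn hd0 hd1 hdm1 hdet2
      (fun j => CamionAux.col_even h01 hproper hn hd0 hd1 hdm1 j)
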